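/- arXiv:2311.10649 — 2 statements merged into one kernel-verified Lean document; each statement's English description precedes it below -/
import Mathlib

section
/- Let d ≥ 1 and let Φ⁺(d) be the d ⊗ d maximally entangled state on (Fin d) × (Fin d). Then the rescaled matrix Φ⁺(d)/d belongs to PPT_2(A:B), where A = B = Fin d. -/
open Matrix
open scoped ComplexOrder
open scoped ComplexOrder

/-- Total positive semidefinite square root: the PSD square root of `M` if `M` is PSD,
and junk value `0` otherwise. -/
noncomputable def msqrt {n : Type*} [Fintype n] [DecidableEq n]
    (M : Matrix n n ℂ) : Matrix n n ℂ :=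
  letI := Classical.dec M.PosSemidef
  if h : M.PosSemidef then
    h.1.eigenvectorUnitary.1 * diagonal ((↑) ∘ (√·) ∘ h.1.eigenvalues) *
      (star h.1.eigenvectorUnitary : Matrix n n ℂ)
  else 0

/-- The trace norm `‖M‖₁ = tr √(Mᴴ M)` of a complex matrix, as a real number. -/
noncomputable def traceNorm {n : Type*} [Fintype n] [DecidableEq n]
    (M : Matrix n n ℂ) : ℝ :=
  (msqrt (Mᴴ * M)).trace.re

/-- The partial transpose over the second party `B`:
`M^{T_B}((a,b),(a',b')) = M((a,b'),(a',b))`. -/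
def ptB {A B : Type*} (M : Matrix (A × B) (A × B) ℂ) : Matrix (A × B) (A × B) ℂ :=
  fun x y => M (x.1, y.2) (y.1, x.2)

/-- Uhlmann fidelity `F(ρ,σ) = (tr √(√σ ρ √σ))²` between positive semidefinite matrices. -/
noncomputable def fidelity {n : Type*} [Fintype n] [DecidableEq n]
    (ρ σ : Matrix n n ℂ) : ℝ :=
  ((msqrt (msqrt σ * ρ * msqrt σ)).trace.re) ^ 2

/-- The set `PPT₂(A:B)`: positive semidefinite `σ` such that there exists `ω` with
`−ω ⪯ σ^{T_B} ⪯ ω` and `‖ω^{T_B}‖₁ ≤ 1`. -/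
def PPT2set {A B : Type*} [Fintype A] [Fintype B] [DecidableEq A] [DecidableEq B] :
    Set (Matrix (A × B) (A × B) ℂ) :=
  {σ | σ.PosSemidef ∧ ∃ ω : Matrix (A × B) (A × B) ℂ,
    (ω - ptB σ).PosSemidef ∧ (ω + ptB σ).PosSemidef ∧ traceNorm (ptB ω) ≤ 1}

/-- The `d ⊗ d` maximally entangled state `Φ⁺(d)`:
`Φ⁺(d)((i,k),(j,l)) = 1/d` if `i = k` and `j = l`, and `0` otherwise. -/
noncomputable def MES (d : ℕ) : Matrix (Fin d × Fin d) (Fin d × Fin d) ℂ :=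
  fun x y => if x.1 = x.2 ∧ y.1 = y.2 then ((d : ℂ))⁻¹ else 0


lemma psd_real_smul {n : Type*} [Fintype n] {t : ℝ} (ht : 0 ≤ t)
    {M : Matrix n n ℂ} (hM : M.PosSemidef) : ((t : ℂ) • M).PosSemidef := by
  refine ⟨?_, fun x => ?_⟩
  · unfold Matrix.IsHermitian
    rw [conjTranspose_smul, hM.1]
    simp
  · exact (hM.smul (a := (t : ℂ)) (by rwa [Complex.zero_le_real])).2 x

lemma msqrt_sq_smul_one {n : Type*} [Fintype n] [DecidableEq n] {t : ℝ} (ht : 0 ≤ t) :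
    msqrt (((t ^ 2 : ℝ) : ℂ) • (1 : Matrix n n ℂ)) = (t : ℂ) • 1 := by
  have hpsd : (((t ^ 2 : ℝ) : ℂ) • (1 : Matrix n n ℂ)).PosSemidef :=
    psd_real_smul (sq_nonneg t) Matrix.PosSemidef.one
  have h1 : ((t : ℂ) • (1 : Matrix n n ℂ)).PosSemidef := psd_real_smul ht .one
  have hsq : ((t : ℂ) • (1 : Matrix n n ℂ)) ^ 2 = ((t ^ 2 : ℝ) : ℂ) • 1 := by
    rw [smul_pow, one_pow]; push_cast; ring_nf
  unfold msqrt
  rw [dif_pos hpsd]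
  have hev : ∀ i, hpsd.1.eigenvalues i = t ^ 2 := by
    intro i
    have h := congrFun (congrFun hpsd.1.conjStarAlgAut_star_eigenvectorUnitary i) i
    rw [map_smul, map_one] at h
    simp at h
    exact_mod_cast h.symm
  have hfun : ((↑) ∘ (√·) ∘ hpsd.1.eigenvalues : n → ℂ) = fun _ => (t : ℂ) := by
    funext i
    simp [hev, Real.sqrt_sq ht]
  have hdiag : diagonal (fun _ : n => (t : ℂ)) = (t : ℂ) • 1 := by
    ext i j
    simp [diagonal, one_apply]
  rw [hfun, hdiag, mul_smul_comm, smul_mul_assoc, mul_one]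
  simp

def swapM (d : ℕ) : Matrix (Fin d × Fin d) (Fin d × Fin d) ℂ :=
  Matrix.of fun x y => if x.1 = y.2 ∧ y.1 = x.2 then 1 else 0

lemma swapM_mul_self (d : ℕ) : swapM d * swapM d = 1 := by
  ext ⟨i, k⟩ ⟨j, l⟩
  rw [Matrix.mul_apply, Fintype.sum_eq_single ((k, i) : Fin d × Fin d)]
  · simp only [one_apply, Prod.ext_iff, Matrix.of_apply, swapM]
    by_cases h1 : i = j <;> by_cases h2 : k = l <;> simp [h1, h2, eq_comm]
  · rintro ⟨a, b⟩ h
    simp only [swapM, ite_and, ite_mul, zero_mul, one_mul, Matrix.of_apply]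
    split_ifs with h1 h2 <;> try rfl
    exact absurd (Prod.ext h2 h1.symm) h

lemma swapM_herm (d : ℕ) : (swapM d)ᴴ = swapM d := by
  ext ⟨i, k⟩ ⟨j, l⟩
  simp [swapM, conjTranspose_apply, apply_ite, and_comm]

lemma one_sub_swap_psd (d : ℕ) : (1 - swapM d).PosSemidef := by
  have key : 1 - swapM d = (((2 : ℝ)⁻¹ : ℝ) : ℂ) • ((1 - swapM d)ᴴ * (1 - swapM d)) := by
    have hH : (1 - swapM d)ᴴ = 1 - swapM d := by
      rw [conjTranspose_sub, conjTranspose_one, swapM_herm]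
    rw [hH]
    have : (1 - swapM d) * (1 - swapM d) = (2 : ℂ) • (1 - swapM d) := by
      rw [mul_sub, sub_mul, sub_mul, one_mul, mul_one, swapM_mul_self, two_smul]
      simp only [one_mul]
      abel
    rw [this, smul_smul]
    norm_num
  rw [key]
  exact psd_real_smul (by norm_num) (Matrix.posSemidef_conjTranspose_mul_self _)

lemma one_add_swap_psd (d : ℕ) : (1 + swapM d).PosSemidef := by
  have key : 1 + swapM d = (((2 : ℝ)⁻¹ : ℝ) : ℂ) • ((1 + swapM d)ᴴ * (1 + swapM d)) := by
    have hH : (1 + swapM d)ᴴ = 1 + swapM d := by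
      rw [conjTranspose_add, conjTranspose_one, swapM_herm]
    rw [hH]
    have : (1 + swapM d) * (1 + swapM d) = (2 : ℂ) • (1 + swapM d) := by
      rw [mul_add, add_mul, add_mul, one_mul, mul_one, swapM_mul_self, two_smul]
      simp only [one_mul]
      abel
    rw [this, smul_smul]
    norm_num
  rw [key]
  exact psd_real_smul (by norm_num) (Matrix.posSemidef_conjTranspose_mul_self _)

def diagM (d : ℕ) : Matrix (Fin d × Fin d) (Fin d × Fin d) ℂ :=
  Matrix.of fun x y => if x.1 = x.2 ∧ y.1 = y.2 then 1 else 0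

lemma diagM_psd (d : ℕ) (hd : 1 ≤ d) : (diagM d).PosSemidef := by
  have hd0 : (d : ℂ) ≠ 0 := Nat.cast_ne_zero.mpr (by omega)
  have h : (diagM d)ᴴ * diagM d = (d : ℂ) • diagM d := by
    ext ⟨i, k⟩ ⟨j, l⟩
    rw [Matrix.mul_apply]
    simp only [conjTranspose_apply, diagM, Matrix.of_apply, Matrix.smul_apply, smul_eq_mul]
    by_cases h1 : i = k <;> by_cases h2 : j = l <;>
      simp [h1, h2, Fintype.sum_prod_type, Finset.sum_ite_eq, apply_ite (star : ℂ → ℂ)]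
  have key : diagM d = (((d : ℝ)⁻¹ : ℝ) : ℂ) • ((diagM d)ᴴ * diagM d) := by
    rw [h, smul_smul]
    push_cast
    rw [inv_mul_cancel₀ hd0, one_smul]
  rw [key]
  exact psd_real_smul (by positivity) (Matrix.posSemidef_conjTranspose_mul_self _)

theorem mes_div_d_mem_PPT2 (d : ℕ) (hd : 1 ≤ d) :
    ((d : ℂ))⁻¹ • MES d ∈ PPT2set (A := Fin d) (B := Fin d) := by
  have hdR : (d : ℝ) ≠ 0 := Nat.cast_ne_zero.mpr (by omega)
  have ht0 : (0 : ℝ) ≤ ((d : ℝ) ^ 2)⁻¹ := by positivity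
  have hcast : ((((d : ℝ) ^ 2)⁻¹ : ℝ) : ℂ) = (d : ℂ)⁻¹ * (d : ℂ)⁻¹ := by
    push_cast; rw [sq, mul_inv]
  have hσ : ((d : ℂ))⁻¹ • MES d = ((((d : ℝ) ^ 2)⁻¹ : ℝ) : ℂ) • diagM d := by
    ext ⟨i, k⟩ ⟨j, l⟩
    simp only [Matrix.smul_apply, MES, diagM, Matrix.of_apply, smul_eq_mul, mul_ite, mul_one, mul_zero,
      hcast]
  have hptB : ptB (((d : ℂ))⁻¹ • MES d) = ((((d : ℝ) ^ 2)⁻¹ : ℝ) : ℂ) • swapM d := by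
    ext ⟨i, k⟩ ⟨j, l⟩
    simp only [ptB, Matrix.smul_apply, MES, swapM, Matrix.of_apply, smul_eq_mul, mul_ite, mul_one,
      mul_zero, hcast]
  refine ⟨hσ ▸ psd_real_smul ht0 (diagM_psd d hd), ((((d : ℝ) ^ 2)⁻¹ : ℝ) : ℂ) • 1, ?_, ?_, ?_⟩
  · rw [hptB, ← smul_sub]
    exact psd_real_smul ht0 (one_sub_swap_psd d)
  · rw [hptB, ← smul_add]
    exact psd_real_smul ht0 (one_add_swap_psd d)
  · have hω : ptB (((((d : ℝ) ^ 2)⁻¹ : ℝ) : ℂ) • (1 : Matrix (Fin d × Fin d) (Fin d × Fin d) ℂ))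
        = ((((d : ℝ) ^ 2)⁻¹ : ℝ) : ℂ) • 1 := by
      ext ⟨i, k⟩ ⟨j, l⟩
      simp only [ptB, Matrix.smul_apply, one_apply, Prod.ext_iff, smul_eq_mul]
      by_cases h1 : i = j <;> by_cases h2 : k = l <;> simp [h1, h2, eq_comm]
    rw [traceNorm, hω]
    have hH : ((((((d : ℝ) ^ 2)⁻¹ : ℝ) : ℂ) • (1 : Matrix (Fin d × Fin d) (Fin d × Fin d) ℂ))ᴴ *
        (((((d : ℝ) ^ 2)⁻¹ : ℝ) : ℂ) • 1)) = (((((d : ℝ) ^ 2)⁻¹) ^ 2 : ℝ) : ℂ) • 1 := by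
      rw [conjTranspose_smul, conjTranspose_one, smul_mul_smul_comm, one_mul]
      congr 1
      rw [Complex.star_def, Complex.conj_ofReal]
      push_cast
      ring
    rw [hH, msqrt_sq_smul_one ht0, Matrix.trace_smul, Matrix.trace_one]
    have hcard : (Fintype.card (Fin d × Fin d) : ℂ) = ((d : ℂ)) ^ 2 := by
      simp [Fintype.card_prod, sq]
    simp only [smul_eq_mul, hcard]
    have : (((((d : ℝ) ^ 2)⁻¹ : ℝ) : ℂ) * ((d : ℂ)) ^ 2) = 1 := by
      push_cast
      field_simp
    rw [this]
    norm_num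
end

section
/- Let A and B be finite types and let k ≥ 2 be an integer. Then PPT#_{k+1}(A:B) ⊆ PPT#_k(A:B), and PPT#_k(A:B) ⊆ PPT'(A:B), where PPT'(A:B) is the Rains set. -/
open Matrix
open scoped ComplexOrder

/-- The matrix absolute value `|M| = √(Mᴴ M)`. -/
noncomputable def matAbs {n : Type*} [Fintype n] [DecidableEq n]
    (M : Matrix n n ℂ) : Matrix n n ℂ :=
  msqrt (Mᴴ * M)

/-- The set `PPT#_k(A:B)`: positive semidefinite `ω₁` such that there exist `ω₂, …, ω_k` with
`|ω_i^{T_B}| ⪯ ω_{i+1}` for all `1 ≤ i ≤ k−1` and `‖ω_k^{T_B}‖₁ ≤ 1`. -/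
def PPThashSet {A B : Type*} [Fintype A] [Fintype B] [DecidableEq A] [DecidableEq B]
    (k : ℕ) : Set (Matrix (A × B) (A × B) ℂ) :=
  {σ | σ.PosSemidef ∧ ∃ ω : ℕ → Matrix (A × B) (A × B) ℂ, ω 1 = σ ∧
    (∀ i, 1 ≤ i → i ≤ k - 1 → (ω (i + 1) - matAbs (ptB (ω i))).PosSemidef) ∧
    traceNorm (ptB (ω k)) ≤ 1}

/-- The Rains set `PPT'(A:B)`: positive semidefinite `σ` with `‖σ^{T_B}‖₁ ≤ 1`. -/
def RainsSet {A B : Type*} [Fintype A] [Fintype B] [DecidableEq A] [DecidableEq B] :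
    Set (Matrix (A × B) (A × B) ℂ) :=
  {σ | σ.PosSemidef ∧ traceNorm (ptB σ) ≤ 1}

open scoped MatrixOrder in
lemma msqrt_eq {n : Type*} [Fintype n] [DecidableEq n] {M : Matrix n n ℂ}
    (h : M.PosSemidef) : msqrt M = CFC.sqrt M := by
  rw [msqrt, dif_pos h, CFC.sqrt_eq_cfc, cfc_nnreal_eq_real _ M, h.1.cfc_eq, IsHermitian.cfc,
    Unitary.conjStarAlgAut_apply]
  congr 3
  ext i
  simp [h.eigenvalues_nonneg i]

open scoped MatrixOrder in
lemma herm_abs {n : Type*} [Fintype n] [DecidableEq n] {M : Matrix n n ℂ}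
    (hM : M.IsHermitian) :
    msqrt (Mᴴ * M) = hM.eigenvectorUnitary.1 *
      diagonal ((fun x : ℝ => ((|x| : ℝ) : ℂ)) ∘ hM.eigenvalues) *
      (star hM.eigenvectorUnitary.1) := by
  have hP : (Mᴴ * M).PosSemidef := posSemidef_conjTranspose_mul_self M
  rw [msqrt_eq hP]
  set U := hM.eigenvectorUnitary.1 with hU
  set E := diagonal ((fun x : ℝ => ((|x| : ℝ) : ℂ)) ∘ hM.eigenvalues) with hE
  set D := diagonal ((fun x : ℝ => ((x : ℝ) : ℂ)) ∘ hM.eigenvalues) with hD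
  have hUU : (star U) * U = 1 :=
    (Matrix.mem_unitaryGroup_iff').mp hM.eigenvectorUnitary.2
  have hEE : E * E = D * D := by
    rw [hE, hD, diagonal_mul_diagonal, diagonal_mul_diagonal]
    ext i
    simp [← Complex.ofReal_mul, abs_mul_abs_self]
  have hSpsd : (U * E * star U).PosSemidef := by
    apply PosSemidef.mul_mul_conjTranspose_same
    refine posSemidef_diagonal_iff.mpr fun i ↦ ?_
    simp only [Function.comp_apply]
    exact_mod_cast Complex.zero_le_real.mpr (abs_nonneg _)
  have hspec : M = U * D * star U := by
    rw [hU, hD]; exact hM.spectral_theorem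
  have key : ∀ X : Matrix n n ℂ, (U * X * star U) * (U * X * star U)
      = U * (X * ((star U * U) * X)) * star U := fun X => by simp only [mul_assoc]
  have hsq : (U * E * star U) ^ 2 = Mᴴ * M := by
    rw [hM, hspec, pow_two, key E, key D, hUU, one_mul, one_mul, hEE]
  exact (CFC.sqrt_eq_iff _ _ hP.nonneg hSpsd.nonneg).mpr (by rw [← sq]; exact hsq)

lemma trace_conj_unit {n : Type*} [Fintype n] [DecidableEq n]
    {U : Matrix n n ℂ} (hU : (star U) * U = 1) (X : Matrix n n ℂ) :
    (U * X * star U).trace = X.trace := by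
  rw [trace_mul_cycle, hU, one_mul]

lemma herm_trace_abs {n : Type*} [Fintype n] [DecidableEq n] {M : Matrix n n ℂ}
    (hM : M.IsHermitian) :
    (msqrt (Mᴴ * M)).trace = ∑ i, ((|hM.eigenvalues i| : ℝ) : ℂ) := by
  rw [herm_abs hM, trace_conj_unit ((Matrix.mem_unitaryGroup_iff').mp hM.eigenvectorUnitary.2),
    trace_diagonal]
  rfl

lemma herm_trace {n : Type*} [Fintype n] [DecidableEq n] {M : Matrix n n ℂ}
    (hM : M.IsHermitian) :
    M.trace = ∑ i, ((hM.eigenvalues i : ℝ) : ℂ) := by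
  conv_lhs => rw [hM.spectral_theorem, Unitary.conjStarAlgAut_apply]
  rw [trace_conj_unit ((Matrix.mem_unitaryGroup_iff').mp hM.eigenvectorUnitary.2),
    trace_diagonal]
  rfl

lemma trace_re_le_traceAbs {n : Type*} [Fintype n] [DecidableEq n] {M : Matrix n n ℂ}
    (hM : M.IsHermitian) : M.trace.re ≤ (msqrt (Mᴴ * M)).trace.re := by
  rw [herm_trace hM, herm_trace_abs hM, Complex.re_sum, Complex.re_sum]
  simp only [Complex.ofReal_re]
  exact Finset.sum_le_sum fun i _ => le_abs_self _

lemma psd_trace_re_nonneg {n : Type*} [Fintype n] [DecidableEq n] {M : Matrix n n ℂ}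
    (hM : M.PosSemidef) : 0 ≤ M.trace.re := by
  have h : ∀ i, 0 ≤ (M i i).re := fun i => by
    have := hM.dotProduct_mulVec_nonneg (Pi.single i 1)
    simp [dotProduct, mulVec, Pi.single_apply, Complex.le_def] at this
    exact this.1
  rw [trace, Complex.re_sum]
  exact Finset.sum_nonneg fun i _ => h i

lemma ptB_trace {A B : Type*} [Fintype A] [Fintype B] (M : Matrix (A × B) (A × B) ℂ) :
    (ptB M).trace = M.trace := by
  unfold trace diag ptB; simp

lemma ptB_isHermitian {A B : Type*} {M : Matrix (A × B) (A × B) ℂ}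
    (hM : M.IsHermitian) : (ptB M).IsHermitian := by
  ext x y
  have := congrFun (congrFun hM (x.1, y.2)) (y.1, x.2)
  simpa [conjTranspose_apply, ptB] using this

open scoped MatrixOrder in
lemma matAbs_posSemidef {n : Type*} [Fintype n] [DecidableEq n] (M : Matrix n n ℂ) :
    (matAbs M).PosSemidef := by
  rw [matAbs, msqrt_eq (posSemidef_conjTranspose_mul_self M)]
  exact (CFC.sqrt_nonneg _).posSemidef

lemma step_lemma {A B : Type*} [Fintype A] [Fintype B] [DecidableEq A] [DecidableEq B]
    {ω ω' : Matrix (A × B) (A × B) ℂ} (h : (ω' - matAbs (ptB ω)).PosSemidef) :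
    ω'.PosSemidef ∧ traceNorm (ptB ω) ≤ traceNorm (ptB ω') := by
  have habs := matAbs_posSemidef (ptB ω)
  have hω' : ω'.PosSemidef := by
    have := h.add habs
    simpa using this
  refine ⟨hω', ?_⟩
  have h1 : traceNorm (ptB ω) ≤ ω'.trace.re := by
    have h0 := psd_trace_re_nonneg h
    rw [trace_sub, Complex.sub_re] at h0
    have : (matAbs (ptB ω)).trace.re ≤ ω'.trace.re := by linarith
    simpa [traceNorm, matAbs] using this
  have h2 : ω'.trace.re ≤ traceNorm (ptB ω') := by
    have := trace_re_le_traceAbs (ptB_isHermitian hω'.1)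
    rwa [ptB_trace] at this
  linarith

theorem PPThash_hierarchy {A B : Type*} [Fintype A] [Fintype B] [DecidableEq A] [DecidableEq B]
    (k : ℕ) (hk : 2 ≤ k) :
    (PPThashSet (A := A) (B := B) (k + 1) ⊆ PPThashSet k) ∧
      (PPThashSet (A := A) (B := B) k ⊆ RainsSet) := by
  constructor
  · rintro σ ⟨hσ, ω, h1, hchain, hlast⟩
    refine ⟨hσ, ω, h1, fun i hi1 hik => hchain i hi1 (by omega), ?_⟩
    have hstep := step_lemma (hchain k (by omega) (by omega))
    exact le_trans hstep.2 hlast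
  · rintro σ ⟨hσ, ω, h1, hchain, hlast⟩
    have main : ∀ i, 1 ≤ i → i ≤ k →
        (ω i).PosSemidef ∧ traceNorm (ptB (ω 1)) ≤ traceNorm (ptB (ω i)) := by
      intro i
      induction i with
      | zero => intro h _; exact absurd h (by omega)
      | succ n ih =>
        intro _ hik
        rcases Nat.eq_zero_or_pos n with hn | hn
        · subst hn
          exact ⟨by rw [h1]; exact hσ, le_refl _⟩
        · have hstep := step_lemma (hchain n hn (by omega))
          have hih := ih hn (by omega)
          exact ⟨hstep.1, le_trans hih.2 hstep.2⟩
    refine ⟨hσ, ?_⟩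
    rw [← h1]
    exact le_trans (main k (by omega) le_rfl).2 hlast
end
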